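/- Under random labeling, the expected off-diagonal cell count of the nearest neighbor contingency table satisfies E[N_ij] = n_i·n_j/(n − 1) for all classes i ≠ j. -/

import Mathlib

open Finset

theorem expected_offdiagonal_cell_count_RL
    {V : Type*} [Fintype V] [DecidableEq V]
    (nn : V → V) (hnn : ∀ x, nn x ≠ x)
    (hn : 2 ≤ Fintype.card V)
    (q : ℕ) (c : Fin q → ℕ) (hc : ∑ k, c k = Fintype.card V)
    (i j : Fin q) (hij : i ≠ j) :
    (∑ ℓ ∈ univ.filter (fun ℓ : V → Fin q =>
        ∀ k, (univ.filter (fun x => ℓ x = k)).card = c k),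
      ((univ.filter (fun x => ℓ x = i ∧ ℓ (nn x) = j)).card : ℝ))
      / ((univ.filter (fun ℓ : V → Fin q =>
        ∀ k, (univ.filter (fun x => ℓ x = k)).card = c k)).card : ℝ)
    = (c i : ℝ) * (c j : ℝ) / ((Fintype.card V : ℝ) - 1) := by
  classical
  set n := Fintype.card V with hnV
  set T : Finset (V → Fin q) :=
    univ.filter (fun ℓ : V → Fin q => ∀ k, (univ.filter (fun x => ℓ x = k)).card = c k)
    with hTdef
  -- permutation invariance of validity
  have hperm : ∀ (σ : Equiv.Perm V) (ℓ : V → Fin q), ℓ ∈ T → (ℓ ∘ σ) ∈ T := by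
    intro σ ℓ hℓ
    simp only [hTdef, mem_filter, mem_univ, true_and] at hℓ ⊢
    intro k
    rw [← hℓ k]
    apply Finset.card_bij' (fun x _ => σ x) (fun x _ => σ.symm x) <;> simp
  -- existence of a permutation moving one distinct pair to another
  have hexσ : ∀ a b a' b' : V, a ≠ b → a' ≠ b' →
      ∃ σ : Equiv.Perm V, σ a = a' ∧ σ b = b' := by
    intro a b a' b' hab ha'b'
    set b'' := Equiv.swap a a' b with hb''
    have h1 : b'' ≠ a' := by
      intro h
      apply hab
      have : Equiv.swap a a' b = Equiv.swap a a' a := by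
        rw [Equiv.swap_apply_left]; exact h
      exact (Equiv.swap a a').injective this |>.symm
    refine ⟨(Equiv.swap a a').trans (Equiv.swap b'' b'), ?_, ?_⟩
    · simp only [Equiv.trans_apply, Equiv.swap_apply_left]
      exact Equiv.swap_apply_of_ne_of_ne h1.symm ha'b'
    · simp only [Equiv.trans_apply, ← hb'', Equiv.swap_apply_left]
  -- the pair count is constant over distinct pairs
  have hconst : ∀ a b a' b' : V, a ≠ b → a' ≠ b' →
      (T.filter (fun ℓ => ℓ a = i ∧ ℓ b = j)).card
        = (T.filter (fun ℓ => ℓ a' = i ∧ ℓ b' = j)).card := by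
    intro a b a' b' hab ha'b'
    obtain ⟨σ, hσa, hσb⟩ := hexσ a b a' b' hab ha'b'
    have hsa : σ.symm a' = a := by rw [← hσa, Equiv.symm_apply_apply]
    have hsb : σ.symm b' = b := by rw [← hσb, Equiv.symm_apply_apply]
    apply Finset.card_bij' (fun ℓ _ => ℓ ∘ σ.symm) (fun ℓ _ => ℓ ∘ σ)
    · intro ℓ hℓ
      simp only [mem_filter] at hℓ ⊢
      exact ⟨hperm σ.symm ℓ hℓ.1, by simp [Function.comp, hsa, hℓ.2.1],
        by simp [Function.comp, hsb, hℓ.2.2]⟩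
    · intro ℓ hℓ
      simp only [mem_filter] at hℓ ⊢
      exact ⟨hperm σ ℓ hℓ.1, by simp [Function.comp, hσa, hℓ.2.1],
        by simp [Function.comp, hσb, hℓ.2.2]⟩
    · intro ℓ _; funext x; simp
    · intro ℓ _; funext x; simp
  -- pick a reference pair
  obtain ⟨a₀, b₀, hab₀⟩ := Fintype.exists_pair_of_one_lt_card (α := V) (by omega)
  set A := (T.filter (fun ℓ => ℓ a₀ = i ∧ ℓ b₀ = j)).card with hA
  -- H1 : sum over labelings of the cell count = n * A
  have H1 : ∑ ℓ ∈ T, (univ.filter (fun x => ℓ x = i ∧ ℓ (nn x) = j)).card = n * A := by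
    have : ∑ ℓ ∈ T, (univ.filter (fun x => ℓ x = i ∧ ℓ (nn x) = j)).card
        = ∑ x : V, (T.filter (fun ℓ => ℓ x = i ∧ ℓ (nn x) = j)).card := by
      simp_rw [Finset.card_filter]
      exact Finset.sum_comm
    rw [this]
    have : ∀ x : V, (T.filter (fun ℓ => ℓ x = i ∧ ℓ (nn x) = j)).card = A :=
      fun x => hconst x (nn x) a₀ b₀ (Ne.symm (hnn x)) hab₀
    simp [this, Finset.card_univ, hnV]
  -- H2 : double counting over ordered distinct pairs
  have H2 : (n * n - n) * A = T.card * (c i * c j) := by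
    have lhs : ∑ p ∈ (univ : Finset V).offDiag,
        (T.filter (fun ℓ => ℓ p.1 = i ∧ ℓ p.2 = j)).card = (n * n - n) * A := by
      have : ∀ p ∈ (univ : Finset V).offDiag,
          (T.filter (fun ℓ => ℓ p.1 = i ∧ ℓ p.2 = j)).card = A := by
        intro p hp
        rw [Finset.mem_offDiag] at hp
        exact hconst p.1 p.2 a₀ b₀ hp.2.2 hab₀
      rw [Finset.sum_congr rfl this, Finset.sum_const, smul_eq_mul,
        Finset.offDiag_card, Finset.card_univ, ← hnV]
    have rhs : ∑ p ∈ (univ : Finset V).offDiag,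
        (T.filter (fun ℓ => ℓ p.1 = i ∧ ℓ p.2 = j)).card = T.card * (c i * c j) := by
      have swap : ∑ p ∈ (univ : Finset V).offDiag,
          (T.filter (fun ℓ => ℓ p.1 = i ∧ ℓ p.2 = j)).card
          = ∑ ℓ ∈ T, ((univ : Finset V).offDiag.filter
              (fun p => ℓ p.1 = i ∧ ℓ p.2 = j)).card := by
        simp_rw [Finset.card_filter]
        exact Finset.sum_comm
      rw [swap]
      have hinner : ∀ ℓ ∈ T, ((univ : Finset V).offDiag.filter
          (fun p => ℓ p.1 = i ∧ ℓ p.2 = j)).card = c i * c j := by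
        intro ℓ hℓ
        have hfib : ∀ k, (univ.filter (fun x => ℓ x = k)).card = c k := by
          simp only [hTdef, mem_filter, mem_univ, true_and] at hℓ
          exact hℓ
        have : (univ : Finset V).offDiag.filter (fun p => ℓ p.1 = i ∧ ℓ p.2 = j)
            = (univ.filter (fun x => ℓ x = i)) ×ˢ (univ.filter (fun x => ℓ x = j)) := by
          ext p
          simp only [Finset.mem_filter, Finset.mem_offDiag, Finset.mem_product, mem_univ,
            true_and]
          constructor
          · rintro ⟨-, h1, h2⟩
            exact ⟨h1, h2⟩
          · rintro ⟨h1, h2⟩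
            refine ⟨?_, h1, h2⟩
            intro hpe
            apply hij
            rw [← h1, ← h2, hpe]
        rw [this, Finset.card_product, hfib i, hfib j]
      exact (Finset.sum_congr rfl hinner).trans
        (by rw [Finset.sum_const, smul_eq_mul])
    exact lhs.symm.trans rhs
  -- T is nonempty
  have hTne : 0 < T.card := by
    have hcard : Fintype.card V = Fintype.card (Σ k : Fin q, Fin (c k)) := by
      simp [Fintype.card_sigma, hc, hnV]
    let e : V ≃ Σ k : Fin q, Fin (c k) := Fintype.equivOfCardEq hcard
    have : (fun x => (e x).1) ∈ T := by
      simp only [hTdef, mem_filter, mem_univ, true_and]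
      intro k
      rw [← Fintype.card_subtype]
      have e1 : {x : V // (e x).1 = k} ≃ {s : Σ k' : Fin q, Fin (c k') // s.1 = k} :=
        e.subtypeEquiv (fun x => Iff.rfl)
      have e2 : {s : Σ k' : Fin q, Fin (c k') // s.1 = k} ≃ Fin (c k) :=
        { toFun := fun s => Fin.cast (congrArg c s.2) s.1.2
          invFun := fun v => ⟨⟨k, v⟩, rfl⟩
          left_inv := by rintro ⟨⟨k', v⟩, rfl⟩; rfl
          right_inv := fun v => rfl }
      rw [Fintype.card_congr (e1.trans e2), Fintype.card_fin]
    exact Finset.card_pos.mpr ⟨_, this⟩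
  -- finish with real arithmetic
  have hnum : (∑ ℓ ∈ T, ((univ.filter (fun x => ℓ x = i ∧ ℓ (nn x) = j)).card : ℝ))
      = (n : ℝ) * A := by
    have h := congrArg (Nat.cast : ℕ → ℝ) H1
    push_cast at h
    exact h
  rw [hnum]
  have ht0 : (T.card : ℝ) ≠ 0 := by positivity
  have hn1 : (n : ℝ) - 1 ≠ 0 := by
    have : (2 : ℝ) ≤ n := by exact_mod_cast hn
    linarith
  rw [div_eq_div_iff ht0 hn1]
  have key : ((n : ℝ) * n - n) * A = T.card * (c i * c j) := by
    have h1 : ((n * n - n : ℕ) : ℝ) = (n : ℝ) * n - n := by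
      have hn0 : 0 < n := lt_of_lt_of_le (by norm_num) hn
      have : n ≤ n * n := Nat.le_mul_of_pos_left n hn0
      push_cast [Nat.cast_sub this]
      ring
    calc ((n : ℝ) * n - n) * A = ((n * n - n : ℕ) : ℝ) * (A : ℝ) := by rw [h1]
      _ = ((( n * n - n) * A : ℕ) : ℝ) := by push_cast; ring
      _ = ((T.card * (c i * c j) : ℕ) : ℝ) := by rw [H2]
      _ = T.card * (c i * c j) := by push_cast; ring
  linear_combination key
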